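/- Let H be a complex Hilbert space and let e, i be finite index types with k = e ⊕ i. Let E_00 be a bounded operator on H, E_0e, E_0i rows, E_e0, E_i0 columns, and E_ee, E_ei, E_ie, E_ii block matrices of bounded operators on H, satisfying the self-adjointness relations (E_αβ)* = E_βα for all labels α, β ∈ {0} ∪ e ∪ i. Write E_kk = [[E_ee, E_ei],[E_ie, E_ii]], E_k0 = [E_e0; E_i0], E_0k = [E_0e, E_0i]. Assume I_k + (i/2)E_kk is invertible and define the SLH parameters S_kk = (I_k + (i/2)E_kk)⁻¹(I_k − (i/2)E_kk) with blocks [[S_ee, S_ei],[S_ie, S_ii]], L_k = −i(I_k + (i/2)E_kk)⁻¹ E_k0 with blocks [L_e; L_i], and H_op = E_00 + (1/2)·Im{E_0k (I_k + (i/2)E_kk)⁻¹ E_k0}, where Im X = (X − X*)/(2i). Assume further that E_ii is invertible, I_i − S_ii is invertible, and that I_e + (i/2)E^fb_ee is invertible, where E^fb_00 = E_00 − E_0i E_ii⁻¹ E_i0, E^fb_0e = E_0e − E_0i E_ii⁻¹ E_ie, E^fb_e0 = E_e0 − E_ei E_ii⁻¹ E_i0, E^fb_ee = E_ee − E_ei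 E_ii⁻¹ E_ie are the blocks of the Schur complement of the full Stratonovich matrix shortening i. Then the feedback-reduced SLH parameters satisfy: (a) S_ee + S_ei (I_i − S_ii)⁻¹ S_ie = (I_e + (i/2)E^fb_ee)⁻¹(I_e − (i/2)E^fb_ee); (b) L_e + S_ei (I_i − S_ii)⁻¹ L_i = −i(I_e + (i/2)E^fb_ee)⁻¹ E^fb_e0; (c) H_op + Im{L_e* S_ei (I_i − S_ii)⁻¹ L_i} + Im{L_i* S_ii (I_i − S_ii)⁻¹ L_i} = E^fb_00 + (1/2)·Im{E^fb_0e (I_e + (i/2)E^fb_ee)⁻¹ E^fb_e0}. -/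

import Mathlib

open Matrix
set_option maxHeartbeats 4000000

/-- `Im X = (X − X*)/(2i)` for an operator (or element of a star ℂ-module). -/
noncomputable def imPart {A : Type*} [AddCommGroup A] [Module ℂ A] [StarAddMonoid A]
    (X : A) : A :=
  ((2 * Complex.I)⁻¹ : ℂ) • (X - star X)

set_option linter.unusedSectionVars false
open Matrix

lemma smul_cancel' {V : Type*} [AddCommGroup V] [Module ℂ V] {c : ℂ} (hc : c ≠ 0)
    {x y : V} (h : c • x = c • y) : x = y := by
  have h2 := congrArg (fun z => c⁻¹ • z) h
  simpa [smul_smul, inv_mul_cancel₀ hc] using h2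

section bilin
variable {R : Type*} [Ring R] [StarRing R] [Algebra ℂ R] [StarModule ℂ R]

/-- sesquilinear pairing `x M y*`. -/
noncomputable def bilin {α β : Type*} [Fintype α] [Fintype β]
    (M : Matrix α β R) (x : α → R) (y : β → R) : R :=
  x ⬝ᵥ M.mulVec (fun j => star (y j))

variable {α β γ δ : Type*} [Fintype α] [Fintype β] [Fintype γ] [Fintype δ]

lemma bilin_add (M N : Matrix α β R) (x : α → R) (y : β → R) :
    bilin (M + N) x y = bilin M x y + bilin N x y := by
  simp [bilin, add_mulVec, dotProduct_add]

lemma bilin_smul (z : ℂ) (M : Matrix α β R) (x : α → R) (y : β → R) :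
    bilin (z • M) x y = z • bilin M x y := by
  simp [bilin, smul_mulVec, dotProduct_smul]

lemma bilin_neg (M : Matrix α β R) (x : α → R) (y : β → R) :
    bilin (-M) x y = -bilin M x y := by
  simp [bilin, neg_mulVec, dotProduct_neg]

lemma bilin_sub (M N : Matrix α β R) (x : α → R) (y : β → R) :
    bilin (M - N) x y = bilin M x y - bilin N x y := by
  simp [bilin, sub_mulVec, dotProduct_sub]

lemma star_bilin (M : Matrix α β R) (x : α → R) (y : β → R) :
    star (bilin M x y) = bilin Mᴴ y x := by
  simp only [bilin, dotProduct, mulVec, star_sum, StarMul.star_mul, star_star,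
    conjTranspose_apply, Finset.sum_mul, Finset.mul_sum, mul_assoc]
  rw [Finset.sum_comm]

lemma conj_mulVec (N : Matrix α γ R) (x : γ → R) :
    (fun j => star ((N.mulVec (fun k => star (x k))) j)) = Matrix.vecMul x Nᴴ := by
  funext j
  simp [mulVec, vecMul, dotProduct, star_sum, StarMul.star_mul, star_star, conjTranspose_apply]

lemma bilin_conj (N : Matrix α γ R) (M : Matrix α β R) (K : Matrix β δ R)
    (x : γ → R) (y : δ → R) :
    (fun j => star ((N.mulVec (fun k => star (x k))) j)) ⬝ᵥ
        M.mulVec (K.mulVec (fun k => star (y k))) = bilin (Nᴴ * M * K) x y := by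
  rw [conj_mulVec, mulVec_mulVec, dotProduct_mulVec, bilin,
    dotProduct_mulVec, vecMul_vecMul, Matrix.mul_assoc]

lemma bilin_fromBlocks (M11 : Matrix α γ R) (M12 : Matrix α δ R)
    (M21 : Matrix β γ R) (M22 : Matrix β δ R)
    (x1 : α → R) (x2 : β → R) (y1 : γ → R) (y2 : δ → R) :
    bilin (fromBlocks M11 M12 M21 M22) (Sum.elim x1 x2) (Sum.elim y1 y2) =
      bilin M11 x1 y1 + bilin M12 x1 y2 + bilin M21 x2 y1 + bilin M22 x2 y2 := by
  have hst : (fun j => star (Sum.elim y1 y2 j)) =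
      Sum.elim (fun j => star (y1 j)) (fun j => star (y2 j)) := by
    funext j; cases j <;> rfl
  rw [bilin, hst, fromBlocks_mulVec]
  simp only [Sum.elim_comp_inl, Sum.elim_comp_inr]
  rw [show (Sum.elim x1 x2 : α ⊕ β → R) = x1 ⊕ᵥ x2 from rfl]
  rw [sumElim_dotProduct_sumElim, dotProduct_add, dotProduct_add]
  simp only [bilin]
  abel
lemma vecMul_dot {α β γ : Type*} [Fintype α] [Fintype β] [Fintype γ]
    (v : α → R) (P : Matrix α β R) (M : Matrix β γ R) (w : γ → R) :
    (v ᵥ* P) ⬝ᵥ M *ᵥ w = v ⬝ᵥ (P * M) *ᵥ w := by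
  rw [dotProduct_mulVec, vecMul_vecMul, ← dotProduct_mulVec]

lemma sum_elim_dot_fromBlocks {α β γ δ : Type*} [Fintype α] [Fintype β] [Fintype γ] [Fintype δ]
    (M11 : Matrix α γ R) (M12 : Matrix α δ R) (M21 : Matrix β γ R) (M22 : Matrix β δ R)
    (x1 : α → R) (x2 : β → R) (w1 : γ → R) (w2 : δ → R) :
    Sum.elim x1 x2 ⬝ᵥ (fromBlocks M11 M12 M21 M22) *ᵥ Sum.elim w1 w2 =
      x1 ⬝ᵥ M11 *ᵥ w1 + x1 ⬝ᵥ M12 *ᵥ w2 + x2 ⬝ᵥ M21 *ᵥ w1 + x2 ⬝ᵥ M22 *ᵥ w2 := by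
  rw [fromBlocks_mulVec]
  simp only [Sum.elim_comp_inl, Sum.elim_comp_inr]
  rw [show (Sum.elim x1 x2 : α ⊕ β → R) = x1 ⊕ᵥ x2 from rfl]
  rw [sumElim_dotProduct_sumElim, dotProduct_add, dotProduct_add]
  abel

end bilin

section imlemmas
variable {A : Type*} [AddCommGroup A] [Module ℂ A] [StarAddMonoid A] [StarModule ℂ A]

lemma imPart_add' (X Y : A) : imPart (X + Y) = imPart X + imPart Y := by
  simp only [imPart, star_add, ← smul_add]
  congr 1
  abel

lemma imPart_sub' (X Y : A) : imPart (X - Y) = imPart X - imPart Y := by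
  simp only [imPart, star_sub, ← smul_sub]
  congr 1
  abel

lemma imPart_real_smul (z : ℂ) (hz : star z = z) (X : A) :
    imPart (z • X) = z • imPart X := by
  simp only [imPart, star_smul, hz, ← smul_sub, smul_smul, mul_comm]

lemma imPart_I_smul (s : A) (hs : star s = s) :
    imPart ((2 * Complex.I) • s) = (2:ℂ) • s := by
  have h1 : star ((2:ℂ) * Complex.I) = -(2 * Complex.I) := by
    simp [Complex.star_def, Complex.conj_I]
  rw [imPart, star_smul, h1, hs, neg_smul, sub_neg_eq_add, ← add_smul, smul_smul]
  congr 1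
  have h2 : (2 : ℂ) * Complex.I ≠ 0 := by simp [Complex.I_ne_zero]
  field_simp
  ring

end imlemmas


section core
variable {R : Type*} [Ring R] [Algebra ℂ R]
variable {e i : Type*} [Fintype e] [Fintype i] [DecidableEq e] [DecidableEq i]

lemma core_aG (a Bee : Matrix e e R) (b Bei : Matrix e i R) (Bie : Matrix i e R)
    (Bii W : Matrix i i R)
    (hab1 : a*Bee + b*Bie = 1) (hab2 : a*Bei + b*Bii = 0) (hBW : Bii*W = W - 1) :
    a*(Bee + Bei*(W*Bie)) = 1 - b*(W*Bie) := by
  have h1 : a*Bee = 1 - b*Bie := eq_sub_of_add_eq hab1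
  have h2 : a*Bei = -(b*Bii) := eq_neg_of_add_eq_zero_left hab2
  have h3 : Bii*(W*Bie) = W*Bie - Bie := by
    rw [← Matrix.mul_assoc, hBW, Matrix.sub_mul, Matrix.one_mul]
  calc a*(Bee + Bei*(W*Bie)) = a*Bee + (a*Bei)*(W*Bie) := by
        simp only [Matrix.mul_add, Matrix.mul_assoc]
    _ = (1 - b*Bie) + (-(b*Bii))*(W*Bie) := by rw [h1, h2]
    _ = (1 - b*Bie) - b*(Bii*(W*Bie)) := by
        simp only [Matrix.neg_mul, Matrix.mul_assoc]; abel
    _ = 1 - b*(W*Bie) := by rw [h3, Matrix.mul_sub]; abel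

lemma core_cG (c' Bie : Matrix i e R) (d Bii W : Matrix i i R)
    (Bee : Matrix e e R) (Bei : Matrix e i R)
    (hab3 : c'*Bee + d*Bie = 0) (hab4 : c'*Bei + d*Bii = 1) (hBW : Bii*W = W - 1) :
    c'*(Bee + Bei*(W*Bie)) = W*Bie - d*(W*Bie) := by
  have h1 : c'*Bee = -(d*Bie) := eq_neg_of_add_eq_zero_left hab3
  have h2 : c'*Bei = 1 - d*Bii := eq_sub_of_add_eq hab4
  have h3 : Bii*(W*Bie) = W*Bie - Bie := by
    rw [← Matrix.mul_assoc, hBW, Matrix.sub_mul, Matrix.one_mul]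
  calc c'*(Bee + Bei*(W*Bie)) = c'*Bee + (c'*Bei)*(W*Bie) := by
        simp only [Matrix.mul_add, Matrix.mul_assoc]
    _ = -(d*Bie) + (1 - d*Bii)*(W*Bie) := by rw [h1, h2]
    _ = -(d*Bie) + (W*Bie - d*(Bii*(W*Bie))) := by
        simp only [Matrix.sub_mul, Matrix.one_mul, Matrix.mul_assoc]
    _ = W*Bie - d*(W*Bie) := by rw [h3, Matrix.mul_sub]; abel

lemma core_Ga (a Bee : Matrix e e R) (b Bei : Matrix e i R) (c' Bie : Matrix i e R)
    (Bii W : Matrix i i R)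
    (hba1 : Bee*a + Bei*c' = 1) (hba3 : Bie*a + Bii*c' = 0) (hWB : W*Bii = W - 1) :
    (Bee + Bei*(W*Bie))*a = 1 - Bei*(W*c') := by
  have h1 : Bee*a = 1 - Bei*c' := eq_sub_of_add_eq hba1
  have h2 : Bie*a = -(Bii*c') := eq_neg_of_add_eq_zero_left hba3
  have h3 : W*(Bii*c') = W*c' - c' := by
    rw [← Matrix.mul_assoc, hWB, Matrix.sub_mul, Matrix.one_mul]
  calc (Bee + Bei*(W*Bie))*a = Bee*a + Bei*(W*(Bie*a)) := by
        simp only [Matrix.add_mul, Matrix.mul_assoc]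
    _ = (1 - Bei*c') + Bei*(W*(-(Bii*c'))) := by rw [h1, h2]
    _ = (1 - Bei*c') - Bei*(W*(Bii*c')) := by
        simp only [Matrix.mul_neg]; abel
    _ = 1 - Bei*(W*c') := by rw [h3, Matrix.mul_sub]; abel

lemma core_Gb (d Bii W : Matrix i i R) (b Bei : Matrix e i R) (Bie : Matrix i e R)
    (Bee : Matrix e e R)
    (hba2 : Bee*b + Bei*d = 0) (hba4 : Bie*b + Bii*d = 1) (hWB : W*Bii = W - 1) :
    (Bee + Bei*(W*Bie))*b = Bei*W - Bei*(W*d) := by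
  have h1 : Bee*b = -(Bei*d) := eq_neg_of_add_eq_zero_left hba2
  have h2 : Bie*b = 1 - Bii*d := eq_sub_of_add_eq hba4
  have h3 : W*(Bii*d) = W*d - d := by
    rw [← Matrix.mul_assoc, hWB, Matrix.sub_mul, Matrix.one_mul]
  calc (Bee + Bei*(W*Bie))*b = Bee*b + Bei*(W*(Bie*b)) := by
        simp only [Matrix.add_mul, Matrix.mul_assoc]
    _ = -(Bei*d) + Bei*(W*(1 - Bii*d)) := by rw [h1, h2]
    _ = -(Bei*d) + (Bei*W - Bei*(W*(Bii*d))) := by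
        simp only [Matrix.mul_sub, Matrix.mul_one]
    _ = Bei*W - Bei*(W*d) := by rw [h3, Matrix.mul_sub]; abel

lemma core_uu (Bee Qee : Matrix e e R) (Bei Qie : Matrix e i R) (Bie : Matrix i e R)
    (Bii Qii W : Matrix i i R)
    (hBh : Bei + Qie = (2:ℂ)•(Qee*Bei + Qie*Bii)) (hBW : Bii*W = W - 1) :
    Bee + ((2:ℂ)•(Qee*(Bei*W)*Bie) + Qie*(W - 2)*Bie) = Bee + Bei*(W*Bie) := by
  have e1 : (2:ℂ)•(Qee*Bei) = Bei + Qie - (2:ℂ)•(Qie*Bii) := by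
    rw [hBh, smul_add]; abel
  have h3 : Bii*(W*Bie) = W*Bie - Bie := by
    rw [← Matrix.mul_assoc, hBW, Matrix.sub_mul, Matrix.one_mul]
  have key : (2:ℂ)•(Qee*(Bei*W)*Bie) = ((2:ℂ)•(Qee*Bei))*(W*Bie) := by
    simp only [Matrix.smul_mul, Matrix.mul_assoc]
  have two_mul' : (W - 2)*Bie = W*Bie - (Bie + Bie) := by
    have : (2 : Matrix i i R) = 1 + 1 := by norm_num
    rw [Matrix.sub_mul, this, Matrix.add_mul, Matrix.one_mul]
  rw [key, e1, Matrix.mul_assoc, two_mul']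
  simp only [Matrix.sub_mul, Matrix.add_mul, Matrix.smul_mul, Matrix.mul_sub, Matrix.mul_add,
    Matrix.mul_assoc, h3, smul_sub, smul_add]
  module

lemma core_uv (Bee Qee : Matrix e e R) (Bei Qie : Matrix e i R) (Bie : Matrix i e R)
    (Bii Qii W : Matrix i i R)
    (hBh : Bei + Qie = (2:ℂ)•(Qee*Bei + Qie*Bii)) (hBW : Bii*W = W - 1)
    (hWB : W*Bii = W - 1) :
    Bei + ((2:ℂ)•(Qee*(Bei*W)*Bii) + Qie*(W - 2)*Bii) = Bei*W := by
  have e1 : (2:ℂ)•(Qee*Bei) = Bei + Qie - (2:ℂ)•(Qie*Bii) := by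
    rw [hBh, smul_add]; abel
  have h3 : Bii*(W*Bii) = W*Bii - Bii := by
    rw [← Matrix.mul_assoc, hBW, Matrix.sub_mul, Matrix.one_mul]
  have key : (2:ℂ)•(Qee*(Bei*W)*Bii) = ((2:ℂ)•(Qee*Bei))*(W*Bii) := by
    simp only [Matrix.smul_mul, Matrix.mul_assoc]
  have two_mul' : (W - 2)*Bii = W*Bii - (Bii + Bii) := by
    have : (2 : Matrix i i R) = 1 + 1 := by norm_num
    rw [Matrix.sub_mul, this, Matrix.add_mul, Matrix.one_mul]
  rw [key, e1, Matrix.mul_assoc, two_mul']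
  simp only [Matrix.sub_mul, Matrix.add_mul, Matrix.smul_mul, Matrix.mul_sub, Matrix.mul_add,
    Matrix.mul_assoc, h3, hWB, hBW, Matrix.mul_one, smul_sub, smul_add]
  module

lemma core_vu (Bei : Matrix e i R) (Qei Bie : Matrix i e R)
    (Bii Qii W : Matrix i i R)
    (hBh2 : Bii + Qii = (2:ℂ)•(Qei*Bei + Qii*Bii)) (hBW : Bii*W = W - 1) :
    Bie + ((2:ℂ)•(Qei*(Bei*W)*Bie) + Qii*(W - 2)*Bie) = W*Bie := by
  have e1 : (2:ℂ)•(Qei*Bei) = Bii + Qii - (2:ℂ)•(Qii*Bii) := by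
    rw [hBh2, smul_add]; abel
  have h3 : Bii*(W*Bie) = W*Bie - Bie := by
    rw [← Matrix.mul_assoc, hBW, Matrix.sub_mul, Matrix.one_mul]
  have key : (2:ℂ)•(Qei*(Bei*W)*Bie) = ((2:ℂ)•(Qei*Bei))*(W*Bie) := by
    simp only [Matrix.smul_mul, Matrix.mul_assoc]
  have two_mul' : (W - 2)*Bie = W*Bie - (Bie + Bie) := by
    have : (2 : Matrix i i R) = 1 + 1 := by norm_num
    rw [Matrix.sub_mul, this, Matrix.add_mul, Matrix.one_mul]
  rw [key, e1, Matrix.mul_assoc, two_mul']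
  simp only [Matrix.sub_mul, Matrix.add_mul, Matrix.smul_mul, Matrix.mul_sub, Matrix.mul_add,
    Matrix.mul_assoc, h3, smul_sub, smul_add]
  module

lemma core_vv (Bei : Matrix e i R) (Qei : Matrix i e R) (Bii Qii W Y : Matrix i i R)
    (TT : Matrix i i R)
    (hBh2 : Bii + Qii = (2:ℂ)•(Qei*Bei + Qii*Bii)) (hBW : Bii*W = W - 1)
    (hWB : W*Bii = W - 1)
    (htail : TT + (2*Complex.I)•Y = 1 - W) :
    Bii + ((2:ℂ)•(Qei*(Bei*W)*Bii) + Qii*(W - 2)*Bii) = -TT - (2*Complex.I)•Y := by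
  have e1 : (2:ℂ)•(Qei*Bei) = Bii + Qii - (2:ℂ)•(Qii*Bii) := by
    rw [hBh2, smul_add]; abel
  have h3 : Bii*(W*Bii) = W*Bii - Bii := by
    rw [← Matrix.mul_assoc, hBW, Matrix.sub_mul, Matrix.one_mul]
  have key : (2:ℂ)•(Qei*(Bei*W)*Bii) = ((2:ℂ)•(Qei*Bei))*(W*Bii) := by
    simp only [Matrix.smul_mul, Matrix.mul_assoc]
  have two_mul' : (W - 2)*Bii = W*Bii - (Bii + Bii) := by
    have : (2 : Matrix i i R) = 1 + 1 := by norm_num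
    rw [Matrix.sub_mul, this, Matrix.add_mul, Matrix.one_mul]
  have hT : TT = 1 - W - (2*Complex.I)•Y := by rw [← htail]; abel
  rw [key, e1, Matrix.mul_assoc, two_mul', hT]
  simp only [Matrix.sub_mul, Matrix.add_mul, Matrix.smul_mul, Matrix.mul_sub, Matrix.mul_add,
    Matrix.mul_assoc, h3, hWB, hBW, Matrix.mul_one, smul_sub, smul_add]
  module

lemma tb_smul_sub_one₁₁ (z : ℂ) (M : Matrix (e ⊕ i) (e ⊕ i) R) :
    (z • M - 1).toBlocks₁₁ = z • M.toBlocks₁₁ - 1 := by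
  ext j k
  simp [Matrix.toBlocks₁₁, Matrix.one_apply]

lemma tb_smul_sub_one₁₂ (z : ℂ) (M : Matrix (e ⊕ i) (e ⊕ i) R) :
    (z • M - 1).toBlocks₁₂ = z • M.toBlocks₁₂ := by
  ext j k
  simp [Matrix.toBlocks₁₂, Matrix.one_apply]

lemma tb_smul_sub_one₂₁ (z : ℂ) (M : Matrix (e ⊕ i) (e ⊕ i) R) :
    (z • M - 1).toBlocks₂₁ = z • M.toBlocks₂₁ := by
  ext j k
  simp [Matrix.toBlocks₂₁, Matrix.one_apply]

lemma tb_smul_sub_one₂₂ (z : ℂ) (M : Matrix (e ⊕ i) (e ⊕ i) R) :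
    (z • M - 1).toBlocks₂₂ = z • M.toBlocks₂₂ - 1 := by
  ext j k
  simp [Matrix.toBlocks₂₂, Matrix.one_apply]


lemma core_tail {R : Type*} [Ring R] [Algebra ℂ R]
    {e i : Type*} [Fintype e] [Fintype i] [DecidableEq i]
    (Y Eii' Bii W : Matrix i i R) (Eie' : Matrix i e R) (Bei : Matrix e i R)
    (hY : Y * Eii' = 1)
    (h4 : (Complex.I/2 : ℂ) • (Eie' * Bei) = 1 - Bii - (Complex.I/2 : ℂ) • (Eii' * Bii))
    (hW2 : (1 - Bii) * W = 1) (hBW : Bii * W = W - 1) :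
    (Y * Eie') * (Bei * W) + (2 * Complex.I) • Y = 1 - W := by
  have hc0 : (Complex.I/2 : ℂ) ≠ 0 := by simp [div_eq_iff, Complex.I_ne_zero]
  apply smul_cancel' hc0
  have e1 : (Complex.I/2 : ℂ) • ((Y * Eie') * (Bei * W))
      = Y * (((Complex.I/2 : ℂ) • (Eie' * Bei)) * W) := by
    simp only [Matrix.smul_mul, Matrix.mul_smul, Matrix.mul_assoc]
  have e2 : ((Complex.I/2 : ℂ) • (Eie' * Bei)) * W
      = 1 - (Complex.I/2 : ℂ) • (Eii' * W) + (Complex.I/2 : ℂ) • Eii' := by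
    rw [h4, Matrix.sub_mul, hW2, Matrix.smul_mul, Matrix.mul_assoc, hBW, Matrix.mul_sub,
      Matrix.mul_one, smul_sub]
    abel
  have e3 : Y * ((1 : Matrix i i R) - (Complex.I/2 : ℂ) • (Eii' * W)
        + (Complex.I/2 : ℂ) • Eii')
      = Y - (Complex.I/2 : ℂ) • W + (Complex.I/2 : ℂ) • (1 : Matrix i i R) := by
    rw [Matrix.mul_add, Matrix.mul_sub, Matrix.mul_one,
      Matrix.mul_smul Y (Complex.I/2 : ℂ) (Eii' * W), ← Matrix.mul_assoc, hY,
      Matrix.one_mul, Matrix.mul_smul Y (Complex.I/2 : ℂ) Eii', hY]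
  have hsc : (Complex.I/2 : ℂ) * (2 * Complex.I) = -1 := by
    field_simp
    exact Complex.I_sq
  calc (Complex.I/2 : ℂ) • ((Y * Eie') * (Bei * W) + (2 * Complex.I) • Y)
      = (Complex.I/2 : ℂ) • ((Y * Eie') * (Bei * W))
        + ((Complex.I/2 : ℂ) * (2 * Complex.I)) • Y := by
        rw [smul_add, smul_smul]
    _ = (Y - (Complex.I/2 : ℂ) • W + (Complex.I/2 : ℂ) • (1 : Matrix i i R))
        + (-1 : ℂ) • Y := by rw [e1, e2, e3, hsc]
    _ = (Complex.I/2 : ℂ) • ((1 : Matrix i i R) - W) := by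
        rw [smul_sub, neg_smul, one_smul]
        abel

end core

/-- the feedback-reduced SLH triple `(S^fb, L^fb, H^fb)` of the
SLH model determined by a Stratonovich generator matrix `E` (indexed by
`0 ∪ e ∪ i`, self-adjoint as `(E_αβ)* = E_βα`) is the SLH triple determined by
the Schur complement of `E` shortening the internal labels `i`. -/
theorem slh_feedback_eq_schur_slh
    {H : Type*} [NormedAddCommGroup H] [InnerProductSpace ℂ H] [CompleteSpace H]
    {e i : Type*} [Fintype e] [Fintype i] [DecidableEq e] [DecidableEq i]
    (E00 : H →L[ℂ] H) (E0e : e → H →L[ℂ] H) (E0i : i → H →L[ℂ] H)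
    (Ee0 : e → H →L[ℂ] H) (Ei0 : i → H →L[ℂ] H)
    (Eee : Matrix e e (H →L[ℂ] H)) (Eei : Matrix e i (H →L[ℂ] H))
    (Eie : Matrix i e (H →L[ℂ] H)) (Eii : Matrix i i (H →L[ℂ] H))
    -- self-adjointness relations (E_αβ)* = E_βα
    (h00 : star E00 = E00)
    (h0e : ∀ j, star (E0e j) = Ee0 j) (h0i : ∀ j, star (E0i j) = Ei0 j)
    (he0 : ∀ j, star (Ee0 j) = E0e j) (hi0 : ∀ j, star (Ei0 j) = E0i j)
    (hee : ∀ j k, star (Eee j k) = Eee k j)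
    (hei : ∀ j k, star (Eei j k) = Eie k j)
    (hie : ∀ j k, star (Eie j k) = Eei k j)
    (hii : ∀ j k, star (Eii j k) = Eii k j)
    -- assembled blocks
    (Ekk : Matrix (e ⊕ i) (e ⊕ i) (H →L[ℂ] H)) (hEkk : Ekk = Matrix.fromBlocks Eee Eei Eie Eii)
    (Ek0 : e ⊕ i → H →L[ℂ] H) (hEk0 : Ek0 = Sum.elim Ee0 Ei0)
    (E0k : e ⊕ i → H →L[ℂ] H) (hE0k : E0k = Sum.elim E0e E0i)
    -- the SLH parameters
    [Invertible (1 + (Complex.I / 2) • Ekk)]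
    (Skk : Matrix (e ⊕ i) (e ⊕ i) (H →L[ℂ] H))
    (hSkk : Skk = ⅟(1 + (Complex.I / 2) • Ekk) * (1 - (Complex.I / 2) • Ekk))
    (Lk : e ⊕ i → H →L[ℂ] H)
    (hLk : Lk = (-Complex.I) • (⅟(1 + (Complex.I / 2) • Ekk)).mulVec Ek0)
    (Hop : H →L[ℂ] H)
    (hHop : Hop = E00 +
      ((1 : ℂ) / 2) • imPart (E0k ⬝ᵥ (⅟(1 + (Complex.I / 2) • Ekk)).mulVec Ek0))
    -- the Schur complement of the Stratonovich matrix shortening i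
    [Invertible Eii]
    (Efb00 : H →L[ℂ] H) (hEfb00 : Efb00 = E00 - E0i ⬝ᵥ (⅟Eii).mulVec Ei0)
    (Efb0e : e → H →L[ℂ] H) (hEfb0e : Efb0e = E0e - Matrix.vecMul (Matrix.vecMul E0i ⅟Eii) Eie)
    (Efbe0 : e → H →L[ℂ] H) (hEfbe0 : Efbe0 = Ee0 - (Eei * ⅟Eii).mulVec Ei0)
    (Efbee : Matrix e e (H →L[ℂ] H)) (hEfbee : Efbee = Eee - Eei * ⅟Eii * Eie)
    -- well-posedness and existence of the reduced Cayley transform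
    [Invertible (1 - Skk.toBlocks₂₂)]
    [Invertible (1 + (Complex.I / 2) • Efbee)] :
    -- (a) the feedback-reduced scattering matrix
    Skk.toBlocks₁₁ + Skk.toBlocks₁₂ * ⅟(1 - Skk.toBlocks₂₂) * Skk.toBlocks₂₁ =
        ⅟(1 + (Complex.I / 2) • Efbee) * (1 - (Complex.I / 2) • Efbee) ∧
    -- (b) the feedback-reduced coupling vector
    ((fun j => Lk (Sum.inl j)) +
        (Skk.toBlocks₁₂ * ⅟(1 - Skk.toBlocks₂₂)).mulVec fun j => Lk (Sum.inr j)) =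
      (-Complex.I) • (⅟(1 + (Complex.I / 2) • Efbee)).mulVec Efbe0 ∧
    -- (c) the feedback-reduced Hamiltonian
    Hop +
        imPart ((fun j => star (Lk (Sum.inl j))) ⬝ᵥ
          (Skk.toBlocks₁₂ * ⅟(1 - Skk.toBlocks₂₂)).mulVec fun j => Lk (Sum.inr j)) +
        imPart ((fun j => star (Lk (Sum.inr j))) ⬝ᵥ
          (Skk.toBlocks₂₂ * ⅟(1 - Skk.toBlocks₂₂)).mulVec fun j => Lk (Sum.inr j)) =
      Efb00 +
        ((1 : ℂ) / 2) • imPart (Efb0e ⬝ᵥ (⅟(1 + (Complex.I / 2) • Efbee)).mulVec Efbe0) := by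
    classical
  -- shorthand for the inverse Cayley matrix and its blocks
  set B : Matrix (e ⊕ i) (e ⊕ i) (H →L[ℂ] H) := ⅟(1 + (Complex.I / 2) • Ekk) with hB

  set Bee := B.toBlocks₁₁ with hBeedef
  set Bei := B.toBlocks₁₂ with hBeidef
  set Bie := B.toBlocks₂₁ with hBiedef
  set Bii := B.toBlocks₂₂ with hBiidef
  have hBfb : B = fromBlocks Bee Bei Bie Bii := (fromBlocks_toBlocks B).symm
  set a : Matrix e e (H →L[ℂ] H) := 1 + (Complex.I / 2) • Eee with ha
  set b : Matrix e i (H →L[ℂ] H) := (Complex.I / 2) • Eei with hb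
  set c' : Matrix i e (H →L[ℂ] H) := (Complex.I / 2) • Eie with hc'
  set d : Matrix i i (H →L[ℂ] H) := 1 + (Complex.I / 2) • Eii with hd
  have hc0 : (Complex.I / 2 : ℂ) ≠ 0 := by
    simp [div_eq_iff, Complex.I_ne_zero]
  have hAfb : (1 + (Complex.I / 2) • Ekk : Matrix (e ⊕ i) (e ⊕ i) (H →L[ℂ] H))
      = fromBlocks a b c' d := by
    rw [hEkk, Matrix.fromBlocks_smul, ← Matrix.fromBlocks_one, Matrix.fromBlocks_add,
      ha, hb, hc', hd, zero_add, zero_add]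
  -- block equations from A * B = 1
  have hABone : fromBlocks a b c' d * fromBlocks Bee Bei Bie Bii = fromBlocks 1 0 0 1 := by
    rw [← hAfb, ← hBfb, Matrix.fromBlocks_one, hB]
    exact mul_invOf_self _
  rw [Matrix.fromBlocks_multiply] at hABone
  have hab1 : a * Bee + b * Bie = 1 := by
    have h := congrArg Matrix.toBlocks₁₁ hABone
    rwa [Matrix.toBlocks_fromBlocks₁₁, Matrix.toBlocks_fromBlocks₁₁] at h
  have hab2 : a * Bei + b * Bii = 0 := by
    have h := congrArg Matrix.toBlocks₁₂ hABone
    rwa [Matrix.toBlocks_fromBlocks₁₂, Matrix.toBlocks_fromBlocks₁₂] at h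
  have hab3 : c' * Bee + d * Bie = 0 := by
    have h := congrArg Matrix.toBlocks₂₁ hABone
    rwa [Matrix.toBlocks_fromBlocks₂₁, Matrix.toBlocks_fromBlocks₂₁] at h
  have hab4 : c' * Bei + d * Bii = 1 := by
    have h := congrArg Matrix.toBlocks₂₂ hABone
    rwa [Matrix.toBlocks_fromBlocks₂₂, Matrix.toBlocks_fromBlocks₂₂] at h
  -- block equations from B * A = 1
  have hBAone : fromBlocks Bee Bei Bie Bii * fromBlocks a b c' d = fromBlocks 1 0 0 1 := by
    rw [← hAfb, ← hBfb, Matrix.fromBlocks_one, hB]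
    exact invOf_mul_self _
  rw [Matrix.fromBlocks_multiply] at hBAone
  have hba1 : Bee * a + Bei * c' = 1 := by
    have h := congrArg Matrix.toBlocks₁₁ hBAone
    rwa [Matrix.toBlocks_fromBlocks₁₁, Matrix.toBlocks_fromBlocks₁₁] at h
  have hba2 : Bee * b + Bei * d = 0 := by
    have h := congrArg Matrix.toBlocks₁₂ hBAone
    rwa [Matrix.toBlocks_fromBlocks₁₂, Matrix.toBlocks_fromBlocks₁₂] at h
  have hba3 : Bie * a + Bii * c' = 0 := by
    have h := congrArg Matrix.toBlocks₂₁ hBAone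
    rwa [Matrix.toBlocks_fromBlocks₂₁, Matrix.toBlocks_fromBlocks₂₁] at h
  have hba4 : Bie * b + Bii * d = 1 := by
    have h := congrArg Matrix.toBlocks₂₂ hBAone
    rwa [Matrix.toBlocks_fromBlocks₂₂, Matrix.toBlocks_fromBlocks₂₂] at h
  -- the scattering matrix in block form
  have hSkk2 : Skk = (2 : ℂ) • B - 1 := by
    have h1 : (1 : Matrix (e ⊕ i) (e ⊕ i) (H →L[ℂ] H)) - (Complex.I / 2) • Ekk
        = (2 : ℂ) • 1 - (1 + (Complex.I / 2) • Ekk) := by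
      rw [two_smul]; abel
    rw [hSkk, h1, Matrix.mul_sub, Matrix.mul_smul, Matrix.mul_one, hB, invOf_mul_self]
  have hS11 : Skk.toBlocks₁₁ = (2:ℂ) • Bee - 1 := by
    rw [hSkk2, tb_smul_sub_one₁₁, hBeedef]
  have hS12 : Skk.toBlocks₁₂ = (2:ℂ) • Bei := by
    rw [hSkk2, tb_smul_sub_one₁₂, hBeidef]
  have hS21 : Skk.toBlocks₂₁ = (2:ℂ) • Bie := by
    rw [hSkk2, tb_smul_sub_one₂₁, hBiedef]
  have hS22 : Skk.toBlocks₂₂ = (2:ℂ) • Bii - 1 := by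
    rw [hSkk2, tb_smul_sub_one₂₂, hBiidef]
  -- the feedback resolvent
  set Wi : Matrix i i (H →L[ℂ] H) := ⅟(1 - Skk.toBlocks₂₂) with hWidef
  set W : Matrix i i (H →L[ℂ] H) := (2:ℂ) • Wi with hWdef
  have h1mS : (1 : Matrix i i (H →L[ℂ] H)) - Skk.toBlocks₂₂ = (2:ℂ) • (1 - Bii) := by
    rw [hS22, smul_sub, two_smul]; module
  have hW2 : (1 - Bii) * W = 1 := by
    rw [hWdef, Matrix.mul_smul, ← Matrix.smul_mul, ← h1mS, hWidef]
    exact mul_invOf_self _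
  have hW1 : W * (1 - Bii) = 1 := by
    rw [hWdef, Matrix.smul_mul, ← Matrix.mul_smul, ← h1mS, hWidef]
    exact invOf_mul_self _
  have hBW : Bii * W = W - 1 := by
    have h := hW2
    rw [Matrix.sub_mul, Matrix.one_mul] at h
    rw [← h]; abel
  have hWB : W * Bii = W - 1 := by
    have h := hW1
    rw [Matrix.mul_sub, Matrix.mul_one] at h
    rw [← h]; abel
  -- the reduced Cayley matrix and its inverse
  set G : Matrix e e (H →L[ℂ] H) := Bee + Bei * (W * Bie) with hG
  have haG : a * G = 1 - b * (W * Bie) := core_aG a Bee b Bei Bie Bii W hab1 hab2 hBW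
  have hcG : c' * G = W * Bie - d * (W * Bie) := core_cG c' Bie d Bii W Bee Bei hab3 hab4 hBW
  have hGa : G * a = 1 - Bei * (W * c') := core_Ga a Bee b Bei c' Bie Bii W hba1 hba3 hWB
  have hGb : G * b = Bei * W - Bei * (W * d) := core_Gb d Bii W b Bei Bie Bee hba2 hba4 hWB
  have hEieG : Eie * G = -(Eii * (W * Bie)) := by
    apply smul_cancel' hc0
    have h := hcG
    rw [hc', Matrix.smul_mul (Complex.I/2) Eie G, hd, Matrix.add_mul, Matrix.one_mul,
      Matrix.smul_mul (Complex.I/2) Eii (W * Bie)] at h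
    rw [h, smul_neg]
    abel
  have hGEei : G * Eei = -(Bei * (W * Eii)) := by
    apply smul_cancel' hc0
    have h := hGb
    rw [hb, Matrix.mul_smul G (Complex.I/2) Eei, hd, Matrix.mul_add W 1 ((Complex.I/2) • Eii),
      Matrix.mul_one, Matrix.mul_smul W (Complex.I/2) Eii,
      Matrix.mul_add Bei W ((Complex.I/2) • (W * Eii)),
      Matrix.mul_smul Bei (Complex.I/2) (W * Eii)] at h
    rw [h, smul_neg]
    abel
  have hK1 : G * (Eei * ⅟Eii) = -(Bei * W) := by
    rw [← Matrix.mul_assoc, hGEei, Matrix.neg_mul, Matrix.mul_assoc, Matrix.mul_assoc,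
      mul_invOf_self, Matrix.mul_one]
  have hK2 : (⅟Eii * Eie) * G = -(W * Bie) := by
    rw [Matrix.mul_assoc, hEieG, Matrix.mul_neg, ← Matrix.mul_assoc, invOf_mul_self,
      Matrix.one_mul]
  have hFblocks : (1 + (Complex.I / 2) • Efbee : Matrix e e (H →L[ℂ] H))
      = a - (Complex.I / 2) • (Eei * ⅟Eii * Eie) := by
    rw [hEfbee, ha, smul_sub]
    abel
  have hFG : (1 + (Complex.I / 2) • Efbee : Matrix e e (H →L[ℂ] H)) * G = 1 := by
    have h5 : (Eei * ⅟Eii * Eie) * G = -(Eei * (W * Bie)) := by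
      rw [Matrix.mul_assoc, Matrix.mul_assoc, hEieG, Matrix.mul_neg, ← Matrix.mul_assoc,
        invOf_mul_self, Matrix.one_mul, Matrix.mul_neg]
    rw [hFblocks, Matrix.sub_mul, haG, Matrix.smul_mul (Complex.I/2) (Eei * ⅟Eii * Eie) G,
      h5, smul_neg, hb, Matrix.smul_mul (Complex.I/2) Eei (W * Bie)]
    abel
  have hGF : G * (1 + (Complex.I / 2) • Efbee : Matrix e e (H →L[ℂ] H)) = 1 := by
    have h5 : G * (Eei * ⅟Eii * Eie) = -(Bei * (W * Eie)) := by
      rw [← Matrix.mul_assoc, hK1, Matrix.neg_mul, Matrix.mul_assoc]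
    rw [hFblocks, Matrix.mul_sub, hGa, Matrix.mul_smul G (Complex.I/2) (Eei * ⅟Eii * Eie),
      h5, smul_neg, hc', Matrix.mul_smul W (Complex.I/2) Eie,
      Matrix.mul_smul Bei (Complex.I/2) (W * Eie)]
    abel
  have hiF : ⅟(1 + (Complex.I / 2) • Efbee : Matrix e e (H →L[ℂ] H)) = G :=
    invOf_eq_right_inv hFG
  refine ⟨?_, ?_, ?_⟩
  · -- part (a)
    rw [hS11, hS12, hS21, hiF]
    have hRHS : (1 : Matrix e e (H →L[ℂ] H)) - (Complex.I / 2) • Efbee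
        = (2:ℂ) • 1 - (1 + (Complex.I / 2) • Efbee) := by
      rw [two_smul]; abel
    rw [hRHS, Matrix.mul_sub, Matrix.mul_smul G (2:ℂ) 1, Matrix.mul_one, hGF, hG, hWdef]
    simp only [Matrix.smul_mul, Matrix.mul_smul, Matrix.mul_assoc, smul_add, smul_smul,
      smul_sub]
    module
  · -- part (b)
    have hM1 : Skk.toBlocks₁₂ * Wi = Bei * W := by
      rw [hS12, Matrix.smul_mul (2:ℂ) Bei Wi, hWdef, Matrix.mul_smul Bei (2:ℂ) Wi]
    have hBv : B *ᵥ Ek0 = Sum.elim (Bee *ᵥ Ee0 + Bei *ᵥ Ei0) (Bie *ᵥ Ee0 + Bii *ᵥ Ei0) := by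
      rw [hBfb, hEk0, Matrix.fromBlocks_mulVec]
      simp [Sum.elim_comp_inl, Sum.elim_comp_inr]
    have hLe : (fun j => Lk (Sum.inl j))
        = (-Complex.I) • (Bee *ᵥ Ee0 + Bei *ᵥ Ei0) := by
      funext j
      rw [hLk]
      simp only [Pi.smul_apply, hBv, Sum.elim_inl]
    have hLi : (fun j => Lk (Sum.inr j))
        = (-Complex.I) • (Bie *ᵥ Ee0 + Bii *ᵥ Ei0) := by
      funext j
      rw [hLk]
      simp only [Pi.smul_apply, hBv, Sum.elim_inr]
    rw [hM1, hLe, hLi, hiF, hEfbe0]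
    rw [Matrix.mulVec_smul (Bei * W) (-Complex.I) (Bie *ᵥ Ee0 + Bii *ᵥ Ei0)]
    rw [Matrix.mulVec_sub, Matrix.mulVec_mulVec, hK1, Matrix.neg_mulVec, sub_neg_eq_add,
      ← smul_add]
    congr 1
    rw [hG, Matrix.add_mulVec, Matrix.mulVec_add, Matrix.mulVec_mulVec, Matrix.mulVec_mulVec,
      show (Bei * W) * Bii = Bei * W - Bei from by
        rw [Matrix.mul_assoc, hWB, Matrix.mul_sub, Matrix.mul_one],
      Matrix.sub_mulVec, ← Matrix.mul_assoc]
    abel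
  · -- part (c)
    have hM1 : Skk.toBlocks₁₂ * Wi = Bei * W := by
      rw [hS12, Matrix.smul_mul (2:ℂ) Bei Wi, hWdef, Matrix.mul_smul Bei (2:ℂ) Wi]
    have hBv : B *ᵥ Ek0 = Sum.elim (Bee *ᵥ Ee0 + Bei *ᵥ Ei0) (Bie *ᵥ Ee0 + Bii *ᵥ Ei0) := by
      rw [hBfb, hEk0, Matrix.fromBlocks_mulVec]
      simp [Sum.elim_comp_inl, Sum.elim_comp_inr]
    have hLe : (fun j => Lk (Sum.inl j)) = (-Complex.I) • (Bee *ᵥ Ee0 + Bei *ᵥ Ei0) := by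
      funext j
      rw [hLk]
      simp only [Pi.smul_apply, hBv, Sum.elim_inl]
    have hLi : (fun j => Lk (Sum.inr j)) = (-Complex.I) • (Bie *ᵥ Ee0 + Bii *ᵥ Ei0) := by
      funext j
      rw [hLk]
      simp only [Pi.smul_apply, hBv, Sum.elim_inr]
    have hu : Ee0 = fun j => star (E0e j) := by funext j; rw [h0e]
    have hv : Ei0 = fun j => star (E0i j) := by funext j; rw [h0i]
    -- Hermitian structure of the blocks
    have hEeeH : Eeeᴴ = Eee := by ext j k; simp [Matrix.conjTranspose_apply, hee]
    have hEiiH : Eiiᴴ = Eii := by ext j k; simp [Matrix.conjTranspose_apply, hii]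
    have hEieH : Eieᴴ = Eei := by ext j k; simp [Matrix.conjTranspose_apply, hie]
    have hEeiH : Eeiᴴ = Eie := by ext j k; simp [Matrix.conjTranspose_apply, hei]
    have hEkkH : Ekkᴴ = Ekk := by
      rw [hEkk, Matrix.fromBlocks_conjTranspose, hEeeH, hEiiH, hEieH, hEeiH]
    have hstarc : star (Complex.I / 2 : ℂ) = -(Complex.I / 2) := by
      rw [Complex.star_def, map_div₀, Complex.conj_I, map_ofNat]
      ring
    have hAH : ((1 + (Complex.I / 2) • Ekk : Matrix (e ⊕ i) (e ⊕ i) (H →L[ℂ] H)))ᴴ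
        = (2:ℂ) • 1 - (1 + (Complex.I / 2) • Ekk) := by
      rw [Matrix.conjTranspose_add, Matrix.conjTranspose_one, Matrix.conjTranspose_smul,
        hEkkH, hstarc, neg_smul, two_smul]
      module
    have hAB1 : (1 + (Complex.I / 2) • Ekk) * B = 1 := by rw [hB]; exact mul_invOf_self _
    have hBH1 : Bᴴ * ((2:ℂ) • 1 - (1 + (Complex.I / 2) • Ekk)) = 1 := by
      rw [← hAH, ← Matrix.conjTranspose_mul, hAB1, Matrix.conjTranspose_one]
    have hBBH : B + Bᴴ = (2:ℂ) • (Bᴴ * B) := by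
      have h2 : (Bᴴ * ((2:ℂ) • 1 - (1 + (Complex.I / 2) • Ekk))) * B = B := by
        rw [hBH1, Matrix.one_mul]
      rw [Matrix.mul_sub, Matrix.mul_smul Bᴴ (2:ℂ) 1, Matrix.mul_one, Matrix.sub_mul,
        Matrix.smul_mul, Matrix.mul_assoc, hAB1, Matrix.mul_one] at h2
      exact (sub_eq_iff_eq_add.mp h2).symm
    have hBHfb : Bᴴ = fromBlocks Beeᴴ Bieᴴ Beiᴴ Biiᴴ := by
      rw [hBfb, Matrix.fromBlocks_conjTranspose]
    have hBBHb := hBBH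
    rw [hBHfb, hBfb, Matrix.fromBlocks_multiply, Matrix.fromBlocks_add,
      Matrix.fromBlocks_smul] at hBBHb
    have hBh : Bei + Bieᴴ = (2:ℂ) • (Beeᴴ * Bei + Bieᴴ * Bii) := by
      have h := congrArg Matrix.toBlocks₁₂ hBBHb
      rwa [Matrix.toBlocks_fromBlocks₁₂, Matrix.toBlocks_fromBlocks₁₂] at h
    have hBh2 : Bii + Biiᴴ = (2:ℂ) • (Beiᴴ * Bei + Biiᴴ * Bii) := by
      have h := congrArg Matrix.toBlocks₂₂ hBBHb
      rwa [Matrix.toBlocks_fromBlocks₂₂, Matrix.toBlocks_fromBlocks₂₂] at h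
    -- the tail identity
    have h4 : (Complex.I/2 : ℂ) • (Eie * Bei) = 1 - Bii - (Complex.I/2 : ℂ) • (Eii * Bii) := by
      have h := hab4
      rw [hc', hd, Matrix.smul_mul (Complex.I/2) Eie Bei, Matrix.add_mul, Matrix.one_mul,
        Matrix.smul_mul (Complex.I/2) Eii Bii] at h
      rw [← h]
      abel
    have htail : (⅟Eii * Eie) * (Bei * W) + (2 * Complex.I) • ⅟Eii = 1 - W :=
      core_tail ⅟Eii Eii Bii W Eie Bei (invOf_mul_self Eii) h4 hW2 hBW
    -- bilin expressions
    have hsb : E0i ⬝ᵥ ⅟Eii *ᵥ Ei0 = bilin ⅟Eii E0i E0i := by rw [hv]; rfl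
    have hinvH : (⅟Eii)ᴴ = ⅟Eii := by
      have h0 : (Eii * ⅟Eii)ᴴ = 1 := by rw [mul_invOf_self, Matrix.conjTranspose_one]
      rw [Matrix.conjTranspose_mul, hEiiH] at h0
      exact (invOf_eq_left_inv h0).symm
    have hssa : star (bilin ⅟Eii E0i E0i) = bilin ⅟Eii E0i E0i := by
      rw [star_bilin, hinvH]
    have hP0 : E0k ⬝ᵥ B *ᵥ Ek0
        = bilin Bee E0e E0e + bilin Bei E0e E0i + bilin Bie E0i E0e + bilin Bii E0i E0i := by
      rw [hE0k, hEk0, hu, hv, hBfb, sum_elim_dot_fromBlocks]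
      rfl
    have hsLe : (fun j => star (Lk (Sum.inl j)))
        = Complex.I • (fun j => star ((Bee *ᵥ Ee0 + Bei *ᵥ Ei0) j)) := by
      funext j
      rw [congrFun hLe j]
      simp [star_smul, Complex.star_def, Complex.conj_I]
    have hsLi : (fun j => star (Lk (Sum.inr j)))
        = Complex.I • (fun j => star ((Bie *ᵥ Ee0 + Bii *ᵥ Ei0) j)) := by
      funext j
      rw [congrFun hLi j]
      simp [star_smul, Complex.star_def, Complex.conj_I]
    have hImI : Complex.I * -Complex.I = 1 := by
      rw [mul_neg, Complex.I_mul_I, neg_neg]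
    have hsplitp : (fun j => star ((Bee *ᵥ (fun k => star (E0e k))
          + Bei *ᵥ (fun k => star (E0i k))) j))
        = (fun j => star ((Bee *ᵥ (fun k => star (E0e k))) j))
          + fun j => star ((Bei *ᵥ (fun k => star (E0i k))) j) := by
      funext j
      simp
    have hsplitq : (fun j => star ((Bie *ᵥ (fun k => star (E0e k))
          + Bii *ᵥ (fun k => star (E0i k))) j))
        = (fun j => star ((Bie *ᵥ (fun k => star (E0e k))) j))
          + fun j => star ((Bii *ᵥ (fun k => star (E0i k))) j) := by
      funext j
      simp
    have hT1 : ((fun j => star (Lk (Sum.inl j))) ⬝ᵥ (Skk.toBlocks₁₂ * Wi) *ᵥ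
          fun j => Lk (Sum.inr j))
        = bilin (Beeᴴ * (Bei * W) * Bie) E0e E0e + bilin (Beeᴴ * (Bei * W) * Bii) E0e E0i
          + bilin (Beiᴴ * (Bei * W) * Bie) E0i E0e
          + bilin (Beiᴴ * (Bei * W) * Bii) E0i E0i := by
      rw [hM1, hsLe, hLi, smul_dotProduct, Matrix.mulVec_smul, dotProduct_smul, smul_smul,
        hImI, one_smul, hu, hv, hsplitp, Matrix.mulVec_add, add_dotProduct, dotProduct_add,
        dotProduct_add, bilin_conj, bilin_conj, bilin_conj, bilin_conj]
      abel
    have hT2 : ((fun j => star (Lk (Sum.inr j))) ⬝ᵥ (Skk.toBlocks₂₂ * Wi) *ᵥ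
          fun j => Lk (Sum.inr j))
        = bilin (Bieᴴ * (Skk.toBlocks₂₂ * Wi) * Bie) E0e E0e
          + bilin (Bieᴴ * (Skk.toBlocks₂₂ * Wi) * Bii) E0e E0i
          + bilin (Biiᴴ * (Skk.toBlocks₂₂ * Wi) * Bie) E0i E0e
          + bilin (Biiᴴ * (Skk.toBlocks₂₂ * Wi) * Bii) E0i E0i := by
      rw [hsLi, hLi, smul_dotProduct, Matrix.mulVec_smul, dotProduct_smul, smul_smul,
        hImI, one_smul, hu, hv, hsplitq, Matrix.mulVec_add, add_dotProduct, dotProduct_add,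
        dotProduct_add, bilin_conj, bilin_conj, bilin_conj, bilin_conj]
      abel
    have h21m : (2:ℂ) • (1 : Matrix i i (H →L[ℂ] H)) = 2 := by
      rw [two_smul, one_add_one_eq_two]
    have hM2 : (2:ℂ) • (Skk.toBlocks₂₂ * Wi) = W - 2 := by
      have h1 : Skk.toBlocks₂₂ * Wi = Bii * W - Wi := by
        rw [hS22, Matrix.sub_mul, Matrix.one_mul, Matrix.smul_mul (2:ℂ) Bii Wi,
          ← Matrix.mul_smul Bii (2:ℂ) Wi, ← hWdef]
      rw [h1, hBW, smul_sub, smul_sub, ← hWdef, h21m]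
      module
    have hT2' : (2:ℂ) • ((fun j => star (Lk (Sum.inr j))) ⬝ᵥ (Skk.toBlocks₂₂ * Wi) *ᵥ
          fun j => Lk (Sum.inr j))
        = bilin (Bieᴴ * (W - 2) * Bie) E0e E0e + bilin (Bieᴴ * (W - 2) * Bii) E0e E0i
          + bilin (Biiᴴ * (W - 2) * Bie) E0i E0e + bilin (Biiᴴ * (W - 2) * Bii) E0i E0i := by
      rw [hT2, smul_add, smul_add, smul_add, ← bilin_smul, ← bilin_smul, ← bilin_smul,
        ← bilin_smul,
        show (2:ℂ) • (Bieᴴ * (Skk.toBlocks₂₂ * Wi) * Bie) = Bieᴴ * (W - 2) * Bie from by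
          rw [← Matrix.smul_mul (2:ℂ) (Bieᴴ * (Skk.toBlocks₂₂ * Wi)) Bie,
            ← Matrix.mul_smul Bieᴴ (2:ℂ) (Skk.toBlocks₂₂ * Wi), hM2],
        show (2:ℂ) • (Bieᴴ * (Skk.toBlocks₂₂ * Wi) * Bii) = Bieᴴ * (W - 2) * Bii from by
          rw [← Matrix.smul_mul (2:ℂ) (Bieᴴ * (Skk.toBlocks₂₂ * Wi)) Bii,
            ← Matrix.mul_smul Bieᴴ (2:ℂ) (Skk.toBlocks₂₂ * Wi), hM2],
        show (2:ℂ) • (Biiᴴ * (Skk.toBlocks₂₂ * Wi) * Bie) = Biiᴴ * (W - 2) * Bie from by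
          rw [← Matrix.smul_mul (2:ℂ) (Biiᴴ * (Skk.toBlocks₂₂ * Wi)) Bie,
            ← Matrix.mul_smul Biiᴴ (2:ℂ) (Skk.toBlocks₂₂ * Wi), hM2],
        show (2:ℂ) • (Biiᴴ * (Skk.toBlocks₂₂ * Wi) * Bii) = Biiᴴ * (W - 2) * Bii from by
          rw [← Matrix.smul_mul (2:ℂ) (Biiᴴ * (Skk.toBlocks₂₂ * Wi)) Bii,
            ← Matrix.mul_smul Biiᴴ (2:ℂ) (Skk.toBlocks₂₂ * Wi), hM2]]
    have hZ : (Efb0e ⬝ᵥ G *ᵥ Efbe0)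
        = bilin G E0e E0e + bilin (Bei * W) E0e E0i + bilin (W * Bie) E0i E0e
          - bilin ((⅟Eii * Eie) * (Bei * W)) E0i E0i := by
      rw [hEfb0e, hEfbe0, hu, hv, Matrix.vecMul_vecMul, Matrix.mulVec_sub,
        Matrix.mulVec_mulVec, sub_dotProduct, dotProduct_sub,
        dotProduct_sub, hK1, Matrix.neg_mulVec, dotProduct_neg,
        dotProduct_neg, vecMul_dot, vecMul_dot, hK2, Matrix.neg_mulVec,
        dotProduct_neg]
      simp only [bilin]
      abel
    have Cuu := core_uu Bee Beeᴴ Bei Bieᴴ Bie Bii Biiᴴ W hBh hBW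
    have Cuv := core_uv Bee Beeᴴ Bei Bieᴴ Bie Bii Biiᴴ W hBh hBW hWB
    have Cvu := core_vu Bei Beiᴴ Bie Bii Biiᴴ W hBh2 hBW
    have Cvv := core_vv Bei Beiᴴ Bii Biiᴴ W ⅟Eii ((⅟Eii * Eie) * (Bei * W)) hBh2 hBW hWB htail
    have master : (E0k ⬝ᵥ B *ᵥ Ek0)
        + (2:ℂ) • ((fun j => star (Lk (Sum.inl j))) ⬝ᵥ (Skk.toBlocks₁₂ * Wi) *ᵥ
            fun j => Lk (Sum.inr j))
        + (2:ℂ) • ((fun j => star (Lk (Sum.inr j))) ⬝ᵥ (Skk.toBlocks₂₂ * Wi) *ᵥ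
            fun j => Lk (Sum.inr j))
        = (Efb0e ⬝ᵥ G *ᵥ Efbe0) - (2 * Complex.I) • bilin ⅟Eii E0i E0i := by
      rw [hP0, hT1, hT2', hZ]
      calc (bilin Bee E0e E0e + bilin Bei E0e E0i + bilin Bie E0i E0e + bilin Bii E0i E0i)
            + (2:ℂ) • (bilin (Beeᴴ * (Bei * W) * Bie) E0e E0e
              + bilin (Beeᴴ * (Bei * W) * Bii) E0e E0i
              + bilin (Beiᴴ * (Bei * W) * Bie) E0i E0e
              + bilin (Beiᴴ * (Bei * W) * Bii) E0i E0i)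
            + (bilin (Bieᴴ * (W - 2) * Bie) E0e E0e + bilin (Bieᴴ * (W - 2) * Bii) E0e E0i
              + bilin (Biiᴴ * (W - 2) * Bie) E0i E0e + bilin (Biiᴴ * (W - 2) * Bii) E0i E0i)
          = bilin (Bee + ((2:ℂ) • (Beeᴴ * (Bei * W) * Bie) + Bieᴴ * (W - 2) * Bie)) E0e E0e
            + bilin (Bei + ((2:ℂ) • (Beeᴴ * (Bei * W) * Bii) + Bieᴴ * (W - 2) * Bii)) E0e E0i
            + bilin (Bie + ((2:ℂ) • (Beiᴴ * (Bei * W) * Bie) + Biiᴴ * (W - 2) * Bie)) E0i E0e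
            + bilin (Bii + ((2:ℂ) • (Beiᴴ * (Bei * W) * Bii) + Biiᴴ * (W - 2) * Bii)) E0i E0i := by
            simp only [bilin_add, bilin_smul, smul_add]
            abel
        _ = bilin (Bee + Bei * (W * Bie)) E0e E0e + bilin (Bei * W) E0e E0i
            + bilin (W * Bie) E0i E0e
            + bilin (-((⅟Eii * Eie) * (Bei * W)) - (2 * Complex.I) • ⅟Eii) E0i E0i := by
            rw [Cuu, Cuv, Cvu, Cvv]
        _ = (bilin G E0e E0e + bilin (Bei * W) E0e E0i + bilin (W * Bie) E0i E0e
              - bilin ((⅟Eii * Eie) * (Bei * W)) E0i E0i)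
            - (2 * Complex.I) • bilin ⅟Eii E0i E0i := by
            rw [hG]
            simp only [bilin_sub, bilin_neg, bilin_smul]
            abel
    have him : imPart (E0k ⬝ᵥ B *ᵥ Ek0)
        = imPart (Efb0e ⬝ᵥ G *ᵥ Efbe0) - (2:ℂ) • bilin ⅟Eii E0i E0i
          - (2:ℂ) • imPart ((fun j => star (Lk (Sum.inl j))) ⬝ᵥ (Skk.toBlocks₁₂ * Wi) *ᵥ
              fun j => Lk (Sum.inr j))
          - (2:ℂ) • imPart ((fun j => star (Lk (Sum.inr j))) ⬝ᵥ (Skk.toBlocks₂₂ * Wi) *ᵥ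
              fun j => Lk (Sum.inr j)) := by
      have h := congrArg imPart master
      rw [imPart_add', imPart_add', imPart_real_smul 2 (by simp),
        imPart_real_smul 2 (by simp), imPart_sub', imPart_I_smul _ hssa] at h
      rw [← h]
      abel
    rw [hHop, hEfb00, hiF, hsb, him]
    module
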